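/- For every prime ideal Q of B not containing J, the localization of A⋈^f J at the prime ideal Q̄^f := {(a, f(a)+j) : a ∈ A, j ∈ J, f(a)+j ∈ Q} is canonically isomorphic, as a ring, to the localization B_Q of B at Q; the isomorphism is induced by the projection p_B : A⋈^f J → B. -/

import Mathlib

section Amalgamation

variable {A B : Type*} [CommRing A] [CommRing B]

/-- The amalgamation `A ⋈^f J` of `A` with `B` along the ideal `J` of `B` with respect to
the ring homomorphism `f : A → B`, realized as the subring
`{(a, f a + j) | a ∈ A, j ∈ J}` of `A × B`. -/
def amalg (f : A →+* B) (J : Ideal B) : Subring (A × B) where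
  carrier := {x : A × B | x.2 - f x.1 ∈ J}
  zero_mem' := by simp
  one_mem' := by simp
  add_mem' := by
    intro x y hx hy
    simp only [Set.mem_setOf_eq, Prod.fst_add, Prod.snd_add, map_add] at *
    have h : x.2 + y.2 - (f x.1 + f y.1) = x.2 - f x.1 + (y.2 - f y.1) := by ring
    rw [h]; exact J.add_mem hx hy
  neg_mem' := by
    intro x hx
    simp only [Set.mem_setOf_eq, Prod.fst_neg, Prod.snd_neg, map_neg] at *
    have h : -x.2 - -f x.1 = -(x.2 - f x.1) := by ring
    rw [h]; exact J.neg_mem hx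
  mul_mem' := by
    intro x y hx hy
    simp only [Set.mem_setOf_eq, Prod.fst_mul, Prod.snd_mul, map_mul] at *
    have h : x.2 * y.2 - f x.1 * f y.1 = x.2 * (y.2 - f y.1) + (x.2 - f x.1) * f y.1 := by ring
    rw [h]
    exact J.add_mem (J.mul_mem_left _ hy) (J.mul_mem_right _ hx)

lemma mem_amalg_iff (f : A →+* B) (J : Ideal B) (x : A × B) :
    x ∈ amalg f J ↔ x.2 - f x.1 ∈ J := Iff.rfl

/-- The natural projection `p_A : A ⋈^f J → A`. -/
def pA (f : A →+* B) (J : Ideal B) : amalg f J →+* A :=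
  (RingHom.fst A B).comp (amalg f J).subtype

/-- The natural projection `p_B : A ⋈^f J → B`. -/
def pB (f : A →+* B) (J : Ideal B) : amalg f J →+* B :=
  (RingHom.snd A B).comp (amalg f J).subtype

/-- For an ideal `Q` of `B`, the ideal `Q̄^f = {(a, f a + j) | a ∈ A, j ∈ J, f a + j ∈ Q}`
of `A ⋈^f J`. -/
def idealQf (f : A →+* B) (J : Ideal B) (Q : Ideal B) : Ideal (amalg f J) :=
  Submodule.copy (Ideal.comap (pB f J) Q)
    {x : amalg f J | ∃ a : A, ∃ j ∈ J, (x : A × B) = (a, f a + j) ∧ f a + j ∈ Q}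
    (by
      ext x
      simp only [Set.mem_setOf_eq, SetLike.mem_coe, Ideal.mem_comap]
      constructor
      · rintro ⟨a, j, hj, hx, hQ⟩
        have h1 : pB f J x = f a + j := by
          show (x : A × B).2 = f a + j
          rw [hx]
        rw [h1]; exact hQ
      · intro hx
        refine ⟨(x : A × B).1, (x : A × B).2 - f (x : A × B).1,
          (mem_amalg_iff f J _).mp x.2, by ext <;> simp, ?_⟩
        simpa using (show (x : A × B).2 ∈ Q from hx))

end Amalgamation

/-- For a prime `Q` of `B` not containing `J`, the localization of `A ⋈^f J` at `Q̄^f`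
is canonically isomorphic to `B_Q`, via the map induced by `p_B`. -/
theorem stmt10 {A B : Type*} [CommRing A] [CommRing B] (f : A →+* B) (J : Ideal B)
    (Q : Ideal B) [Q.IsPrime] (hJQ : ¬ J ≤ Q) [(idealQf f J Q).IsPrime] :
    ∃ e : Localization.AtPrime (idealQf f J Q) ≃+* Localization.AtPrime Q,
      ∀ x : amalg f J,
        e (algebraMap (amalg f J) (Localization.AtPrime (idealQf f J Q)) x) =
          algebraMap B (Localization.AtPrime Q) (pB f J x) := by
  classical
  obtain ⟨j0, hj0J, hj0Q⟩ := SetLike.not_le_iff_exists.mp hJQ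
  have hcopy : idealQf f J Q = Ideal.comap (pB f J) Q := Submodule.copy_eq _ _ _
  have hmem : ∀ x : amalg f J, x ∈ idealQf f J Q ↔ pB f J x ∈ Q := by
    intro x; rw [hcopy]; exact Iff.rfl
  set M := (idealQf f J Q).primeCompl with hM
  let g : amalg f J →+* Localization.AtPrime Q :=
    (algebraMap B (Localization.AtPrime Q)).comp (pB f J)
  letI : Algebra (amalg f J) (Localization.AtPrime Q) := g.toAlgebra
  have halg : ∀ x : amalg f J,
      algebraMap (amalg f J) (Localization.AtPrime Q) x
        = algebraMap B (Localization.AtPrime Q) (pB f J x) := fun x => rfl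
  have hmk : ∀ b : B, (b * j0 - f 0 ∈ J) := by
    intro b; simpa using J.mul_mem_left b hj0J
  haveI : IsLocalization M (Localization.AtPrime Q) := by
    constructor
    constructor
    · rintro ⟨m, hm⟩
      have h1 : pB f J m ∈ Q.primeCompl := fun h => hm ((hmem m).mpr h)
      simpa [halg] using
        IsLocalization.map_units (Localization.AtPrime Q) (⟨pB f J m, h1⟩ : Q.primeCompl)
    · intro z
      obtain ⟨⟨b, s⟩, hz⟩ := IsLocalization.surj Q.primeCompl z
      refine ⟨⟨⟨(0, b * j0), hmk b⟩, ⟨⟨(0, (s : B) * j0), hmk s⟩, ?_⟩⟩, ?_⟩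
      · intro h
        have h2 : (s : B) * j0 ∈ Q := (hmem _).mp h
        rcases (Ideal.isPrime_iff.mp ‹Q.IsPrime›).2 h2 with h3 | h3
        · exact s.2 h3
        · exact hj0Q h3
      · show z * algebraMap B (Localization.AtPrime Q) ((s : B) * j0)
            = algebraMap B (Localization.AtPrime Q) (b * j0)
        rw [map_mul, map_mul, ← mul_assoc]
        exact congrArg (· * algebraMap B (Localization.AtPrime Q) j0) hz
    · intro x y h
      rw [halg, halg] at h
      obtain ⟨c, hc⟩ := (IsLocalization.eq_iff_exists Q.primeCompl _).mp h
      refine ⟨⟨⟨(0, (c : B) * j0), hmk c⟩, ?_⟩, ?_⟩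
      · intro hmem'
        have h2 : (c : B) * j0 ∈ Q := (hmem _).mp hmem'
        rcases (Ideal.isPrime_iff.mp ‹Q.IsPrime›).2 h2 with h3 | h3
        · exact c.2 h3
        · exact hj0Q h3
      · apply Subtype.ext
        apply Prod.ext
        · show (0 : A) * (x : A × B).1 = 0 * (y : A × B).1
          simp
        · show (c : B) * j0 * (x : A × B).2 = (c : B) * j0 * (y : A × B).2
          have : (c : B) * (x : A × B).2 = (c : B) * (y : A × B).2 := hc
          calc (c : B) * j0 * (x : A × B).2 = j0 * ((c : B) * (x : A × B).2) := by ring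
            _ = j0 * ((c : B) * (y : A × B).2) := by rw [this]
            _ = (c : B) * j0 * (y : A × B).2 := by ring
  refine ⟨(IsLocalization.algEquiv M (Localization.AtPrime (idealQf f J Q))
      (Localization.AtPrime Q)).toRingEquiv, fun x => ?_⟩
  have := (IsLocalization.algEquiv M (Localization.AtPrime (idealQf f J Q))
      (Localization.AtPrime Q)).commutes x
  exact this
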